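/- arXiv:2005.04123 — 2 statements merged into one kernel-verified Lean document; each statement's English description precedes it below -/
import Mathlib

section
/- Forgetting is transitive: if B expresses forgetting the variables Y from A, and C expresses forgetting the variables Z from B, then C expresses forgetting Y ∪ Z from A. -/
abbrev Lit : Type := ℕ × Bool
abbrev Clause : Type := Finset Lit
abbrev Cnf : Type := Finset Clause

def Lit.negate (l : Lit) : Lit := (l.1, !l.2)

def litSat (M : ℕ → Bool) (l : Lit) : Prop := M l.1 = l.2

def clauseSat (M : ℕ → Bool) (c : Clause) : Prop := ∃ l ∈ c, litSat M l

def cnfSat (M : ℕ → Bool) (F : Cnf) : Prop := ∀ c ∈ F, clauseSat M c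

def ClTaut (c : Clause) : Prop := ∃ v : ℕ, (v, true) ∈ c ∧ (v, false) ∈ c

def cnfVars (F : Cnf) : Set ℕ := {v | ∃ c ∈ F, ∃ b, (v, b) ∈ c}

inductive PropForm : Type
  | tru : PropForm
  | fls : PropForm
  | var : ℕ → PropForm
  | neg : PropForm → PropForm
  | conj : PropForm → PropForm → PropForm
  | disj : PropForm → PropForm → PropForm

def PropForm.eval (M : ℕ → Bool) : PropForm → Bool
  | .tru => true
  | .fls => false
  | .var n => M n
  | .neg φ => !(PropForm.eval M φ)
  | .conj φ ψ => PropForm.eval M φ && PropForm.eval M ψ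
  | .disj φ ψ => PropForm.eval M φ || PropForm.eval M ψ

def PropForm.vars : PropForm → Set ℕ
  | .tru => ∅
  | .fls => ∅
  | .var n => {n}
  | .neg φ => PropForm.vars φ
  | .conj φ ψ => PropForm.vars φ ∪ PropForm.vars ψ
  | .disj φ ψ => PropForm.vars φ ∪ PropForm.vars ψ

def entailsForm (A : Cnf) (φ : PropForm) : Prop :=
  ∀ M, cnfSat M A → PropForm.eval M φ = true

/-- `B` expresses forgetting all variables but `Y` from `A`. -/
def ForgetExpr (A : Cnf) (Y : Set ℕ) (B : Cnf) : Prop :=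
  cnfVars B ⊆ Y ∧
    ∀ φ : PropForm, PropForm.vars φ ⊆ Y → (entailsForm A φ ↔ entailsForm B φ)

def litSetSat (M : ℕ → Bool) (S : Set Lit) : Prop := ∀ l ∈ S, litSat M l

open Classical

def litForm (l : Lit) : PropForm := if l.2 then .var l.1 else .neg (.var l.1)

lemma eval_litForm (M : ℕ → Bool) (l : Lit) :
    (litForm l).eval M = true ↔ litSat M l := by
  obtain ⟨n, b⟩ := l
  cases b <;> simp [litForm, PropForm.eval, litSat]

lemma vars_litForm (l : Lit) : (litForm l).vars = {l.1} := by
  obtain ⟨n, b⟩ := l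
  cases b <;> simp [litForm, PropForm.vars]

def bigConj (L : List PropForm) : PropForm := L.foldr .conj .tru
def bigDisj (L : List PropForm) : PropForm := L.foldr .disj .fls

lemma eval_bigConj (M : ℕ → Bool) (L : List PropForm) :
    (bigConj L).eval M = true ↔ ∀ ψ ∈ L, ψ.eval M = true := by
  induction L with
  | nil => simp [bigConj, PropForm.eval]
  | cons a L ih =>
    simp only [bigConj, List.foldr] at ih ⊢
    simp [PropForm.eval, Bool.and_eq_true, ih]

lemma eval_bigDisj (M : ℕ → Bool) (L : List PropForm) :
    (bigDisj L).eval M = true ↔ ∃ ψ ∈ L, ψ.eval M = true := by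
  induction L with
  | nil => simp [bigDisj, PropForm.eval]
  | cons a L ih =>
    simp only [bigDisj, List.foldr] at ih ⊢
    simp [PropForm.eval, Bool.or_eq_true, ih]

lemma vars_bigConj {v : ℕ} {L : List PropForm} (h : v ∈ (bigConj L).vars) :
    ∃ ψ ∈ L, v ∈ ψ.vars := by
  induction L with
  | nil => simp [bigConj, PropForm.vars] at h
  | cons a L ih =>
    simp only [bigConj, List.foldr, PropForm.vars, Set.mem_union] at h
    rcases h with h | h
    · exact ⟨a, by simp, h⟩
    · obtain ⟨ψ, hψ, hv⟩ := ih h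
      exact ⟨ψ, by simp [hψ], hv⟩

lemma vars_bigDisj {v : ℕ} {L : List PropForm} (h : v ∈ (bigDisj L).vars) :
    ∃ ψ ∈ L, v ∈ ψ.vars := by
  induction L with
  | nil => simp [bigDisj, PropForm.vars] at h
  | cons a L ih =>
    simp only [bigDisj, List.foldr, PropForm.vars, Set.mem_union] at h
    rcases h with h | h
    · exact ⟨a, by simp, h⟩
    · obtain ⟨ψ, hψ, hv⟩ := ih h
      exact ⟨ψ, by simp [hψ], hv⟩

noncomputable def cnfForm (F : Cnf) : PropForm :=
  bigConj (F.toList.map fun c => bigDisj (c.toList.map litForm))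

lemma eval_cnfForm (M : ℕ → Bool) (F : Cnf) :
    (cnfForm F).eval M = true ↔ cnfSat M F := by
  simp only [cnfForm, eval_bigConj, List.mem_map, Finset.mem_toList, cnfSat]
  constructor
  · intro h c hc
    have := h _ ⟨c, hc, rfl⟩
    rw [eval_bigDisj] at this
    obtain ⟨ψ, hψ, he⟩ := this
    simp only [List.mem_map, Finset.mem_toList] at hψ
    obtain ⟨l, hl, rfl⟩ := hψ
    exact ⟨l, hl, (eval_litForm M l).mp he⟩
  · rintro h ψ ⟨c, hc, rfl⟩
    obtain ⟨l, hl, hsat⟩ := h c hc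
    rw [eval_bigDisj]
    exact ⟨litForm l, List.mem_map_of_mem (Finset.mem_toList.mpr hl), (eval_litForm M l).mpr hsat⟩

lemma vars_cnfForm (F : Cnf) : (cnfForm F).vars ⊆ cnfVars F := by
  intro v hv
  obtain ⟨ψ, hψ, hv⟩ := vars_bigConj hv
  simp only [List.mem_map, Finset.mem_toList] at hψ
  obtain ⟨c, hc, rfl⟩ := hψ
  obtain ⟨ψ', hψ', hv'⟩ := vars_bigDisj hv
  simp only [List.mem_map, Finset.mem_toList] at hψ'
  obtain ⟨l, hl, rfl⟩ := hψ'
  rw [vars_litForm] at hv'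
  simp only [Set.mem_singleton_iff] at hv'
  subst hv'
  exact ⟨c, hc, l.2, by simpa using hl⟩

lemma eval_congr {M N : ℕ → Bool} (φ : PropForm)
    (h : ∀ v ∈ φ.vars, M v = N v) : φ.eval M = φ.eval N := by
  induction φ with
  | tru => rfl
  | fls => rfl
  | var n => exact h n rfl
  | neg φ ih => simp [PropForm.eval, ih (fun v hv => h v hv)]
  | conj φ ψ ihφ ihψ =>
    simp [PropForm.eval, ihφ (fun v hv => h v (Or.inl hv)),
      ihψ (fun v hv => h v (Or.inr hv))]
  | disj φ ψ ihφ ihψ =>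
    simp [PropForm.eval, ihφ (fun v hv => h v (Or.inl hv)),
      ihψ (fun v hv => h v (Or.inr hv))]

lemma cnfSat_congr {M N : ℕ → Bool} (F : Cnf)
    (h : ∀ v ∈ cnfVars F, M v = N v) (hM : cnfSat M F) : cnfSat N F := by
  intro c hc
  obtain ⟨l, hl, hsat⟩ := hM c hc
  refine ⟨l, hl, ?_⟩
  have : M l.1 = N l.1 := h l.1 ⟨c, hc, l.2, by simpa using hl⟩
  rwa [litSat, ← this]

def cnfVarsFin (F : Cnf) : Finset ℕ := F.biUnion fun c => c.image Prod.fst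

lemma mem_cnfVarsFin {v : ℕ} {F : Cnf} : v ∈ cnfVarsFin F ↔ v ∈ cnfVars F := by
  simp only [cnfVarsFin, Finset.mem_biUnion, Finset.mem_image, cnfVars, Set.mem_setOf_eq]
  constructor
  · rintro ⟨c, hc, l, hl, rfl⟩; exact ⟨c, hc, l.2, by simpa using hl⟩
  · rintro ⟨c, hc, b, hb⟩; exact ⟨c, hc, (v, b), hb, rfl⟩

/-- Transitivity of forgetting: if `B` expresses forgetting `Y` from `A` and
`C` expresses forgetting `Z` from `B`, then `C` expresses forgetting
`Y ∪ Z` from `A`. -/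
theorem stmt5 (A B C : Cnf) (Y Z : Set ℕ)
    (hAB : ForgetExpr A (cnfVars A \ Y) B)
    (hBC : ForgetExpr B (cnfVars B \ Z) C) :
    ForgetExpr A (cnfVars A \ (Y ∪ Z)) C := by
  obtain ⟨hBvars, hABent⟩ := hAB
  obtain ⟨hCvars, hBCent⟩ := hBC
  have hCsub : cnfVars C ⊆ cnfVars A \ (Y ∪ Z) := by
    intro v hv
    have h1 := hCvars hv
    have h2 := hBvars h1.1
    exact ⟨h2.1, fun h => h.elim h2.2 h1.2⟩
  refine ⟨hCsub, fun φ hφ => ?_⟩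
  have hφY : φ.vars ⊆ cnfVars A \ Y :=
    fun v hv => ⟨(hφ hv).1, fun h => (hφ hv).2 (Or.inl h)⟩
  rw [hABent φ hφY]
  constructor
  · intro hB M hMC
    by_cases hex : ∃ M'', cnfSat M'' B ∧ ∀ v ∈ cnfVars B \ Z, M'' v = M v
    · obtain ⟨M'', hM''B, hagree⟩ := hex
      set N : ℕ → Bool := fun v => if v ∈ cnfVars B then M'' v else M v with hN
      have hNB : cnfSat N B :=
        cnfSat_congr B (fun v hv => by simp [hN, hv]) hM''B
      have hNφ := hB N hNB
      have hMN : ∀ v ∈ φ.vars, M v = N v := by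
        intro v hv
        by_cases hvB : v ∈ cnfVars B
        · have hvZ : v ∉ Z := fun h => (hφ hv).2 (Or.inr h)
          simp [hN, hvB, (hagree v ⟨hvB, hvZ⟩).symm]
        · simp [hN, hvB]
      rw [eval_congr φ hMN]
      exact hNφ
    · exfalso
      push_neg at hex
      set φ0 : PropForm := bigConj ((cnfVarsFin B).toList.map
        (fun v => if v ∈ Z then PropForm.tru else litForm (v, M v))) with hφ0
      have heval0 : ∀ N : ℕ → Bool,
          (φ0.eval N = true ↔ ∀ v ∈ cnfVars B \ Z, N v = M v) := by
        intro N
        rw [hφ0, eval_bigConj]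
        constructor
        · intro h v hv
          have hvfin : v ∈ cnfVarsFin B := mem_cnfVarsFin.mpr hv.1
          have := h _ (List.mem_map_of_mem (Finset.mem_toList.mpr hvfin))
          simp only [if_neg hv.2] at this
          exact (eval_litForm N (v, M v)).mp this
        · rintro h ψ hψ
          simp only [List.mem_map, Finset.mem_toList] at hψ
          obtain ⟨v, hvfin, rfl⟩ := hψ
          by_cases hvZ : v ∈ Z
          · simp [hvZ, PropForm.eval]
          · simp only [if_neg hvZ]
            exact (eval_litForm N (v, M v)).mpr (h v ⟨mem_cnfVarsFin.mp hvfin, hvZ⟩)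
      have hvars0 : (PropForm.neg φ0).vars ⊆ cnfVars B \ Z := by
        show φ0.vars ⊆ _
        intro v hv
        rw [hφ0] at hv
        obtain ⟨ψ, hψ, hv⟩ := vars_bigConj hv
        simp only [List.mem_map, Finset.mem_toList] at hψ
        obtain ⟨w, hwfin, rfl⟩ := hψ
        by_cases hwZ : w ∈ Z
        · simp [hwZ, PropForm.vars] at hv
        · simp only [if_neg hwZ, vars_litForm, Set.mem_singleton_iff] at hv
          subst hv
          exact ⟨mem_cnfVarsFin.mp hwfin, hwZ⟩
      have hentB : entailsForm B (.neg φ0) := by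
        intro N hNB
        obtain ⟨v, hv, hne⟩ := hex N hNB
        have : φ0.eval N = false := by
          by_contra h
          exact hne (((heval0 N).mp (by simpa using h)) v hv)
        simp [PropForm.eval, this]
      have hentC : entailsForm C (.neg φ0) := (hBCent _ hvars0).mp hentB
      have := hentC M hMC
      simp only [PropForm.eval, Bool.not_eq_true'] at this
      rw [(heval0 M).mpr (fun v _ => rfl)] at this
      exact Bool.true_eq_false.mp this
  · intro hC M hMB
    have hMC : cnfSat M C := by
      have h1 : entailsForm C (cnfForm C) := fun N hN => (eval_cnfForm N C).mpr hN
      have h2 : entailsForm B (cnfForm C) :=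
        (hBCent _ (le_trans (vars_cnfForm C) hCvars)).mpr h1
      exact (eval_cnfForm M C).mp (h2 M hMB)
    exact hC M hMC
end

section
/- If every clause of a CNF formula F is superirredundant in F, then F is a minimal-size formula: no CNF formula equivalent to F has strictly smaller size. -/
def isResolvent (c1 c2 r : Clause) (v : ℕ) : Prop :=
  (v, true) ∈ c1 ∧ (v, false) ∈ c2 ∧
    r = c1.erase (v, true) ∪ c2.erase (v, false)

inductive Deriv (F : Set Clause) : Clause → Prop
  | base {c : Clause} : c ∈ F → Deriv F c
  | step {c1 c2 r : Clause} {v : ℕ} : Deriv F c1 → Deriv F c2 →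
      isResolvent c1 c2 r v → ¬ ClTaut r → Deriv F r

def ResCn (F : Set Clause) : Set Clause := {c | Deriv F c}

def setSat (M : ℕ → Bool) (S : Set Clause) : Prop := ∀ c ∈ S, clauseSat M c

def setEntails (S : Set Clause) (c : Clause) : Prop :=
  ∀ M, setSat M S → clauseSat M c

def superRedundant (F : Cnf) (c : Clause) : Prop :=
  setEntails (ResCn ↑F \ {c}) c

def cnfSize (F : Cnf) : ℕ := ∑ c ∈ F, c.card

def cnfEquiv (F G : Cnf) : Prop := ∀ M, cnfSat M F ↔ cnfSat M G

section Aux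

lemma clauseSat_of_subset {M : ℕ → Bool} {c d : Clause} (h : c ⊆ d)
    (hs : clauseSat M c) : clauseSat M d := by
  obtain ⟨l, hl, hsat⟩ := hs
  exact ⟨l, h hl, hsat⟩

lemma resolvent_sound {M : ℕ → Bool} {c1 c2 r : Clause} {v : ℕ}
    (h : isResolvent c1 c2 r v) (h1 : clauseSat M c1) (h2 : clauseSat M c2) :
    clauseSat M r := by
  obtain ⟨hv1, hv2, hr⟩ := h
  obtain ⟨l, hl, hsat⟩ := h1
  by_cases hlv : l = (v, true)
  · obtain ⟨l2, hl2, hsat2⟩ := h2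
    by_cases hlv2 : l2 = (v, false)
    · subst hlv; subst hlv2
      simp [litSat] at hsat hsat2
      rw [hsat] at hsat2; exact absurd hsat2 (by simp)
    · exact ⟨l2, hr ▸ Finset.mem_union_right _ (Finset.mem_erase.2 ⟨hlv2, hl2⟩), hsat2⟩
  · exact ⟨l, hr ▸ Finset.mem_union_left _ (Finset.mem_erase.2 ⟨hlv, hl⟩), hsat⟩

lemma deriv_mono_closure {S T : Set Clause} (h : ∀ x ∈ S, Deriv T x) :
    ∀ {c : Clause}, Deriv S c → Deriv T c := by
  intro c hc
  induction hc with
  | base h' => exact h _ h'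
  | step _ _ hres ht ih1 ih2 => exact Deriv.step ih1 ih2 hres ht

lemma deriv_sound {S : Set Clause} {c : Clause} (h : Deriv S c) (M : ℕ → Bool)
    (hM : setSat M S) : clauseSat M c := by
  induction h with
  | base h' => exact hM _ h'
  | step _ _ hres _ ih1 ih2 => exact resolvent_sound hres ih1 ih2

lemma deriv_nontaut {S : Set Clause} {c : Clause} (h : Deriv S c)
    (hS : ∀ x ∈ S, ¬ ClTaut x) : ¬ ClTaut c := by
  induction h with
  | base h' => exact hS _ h'
  | step _ _ _ ht _ _ => exact ht

def varsFin (G : Cnf) : Finset ℕ := G.sup (fun g => g.image Prod.fst)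

lemma mem_varsFin {w : ℕ} {G : Cnf} :
    w ∈ varsFin G ↔ ∃ g ∈ G, ∃ b, (w, b) ∈ g := by
  simp only [varsFin, Finset.mem_sup, Finset.mem_image]
  constructor
  · rintro ⟨g, hg, ⟨a, b⟩, hab, rfl⟩
    exact ⟨g, hg, b, hab⟩
  · rintro ⟨g, hg, b, hb⟩
    exact ⟨g, hg, (w, b), hb, rfl⟩

lemma complete_base (G : Cnf) (c : Clause) (hc : ¬ ClTaut c)
    (hv : varsFin G ⊆ c.image Prod.fst)
    (hent : setEntails ↑G c) : ∃ d, Deriv (↑G : Set Clause) d ∧ d ⊆ c := by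
  classical
  set M0 : ℕ → Bool := fun v => decide ((v, false) ∈ c) with hM0
  have hnc : ¬ clauseSat M0 c := by
    rintro ⟨⟨v, b⟩, hmem, hsat⟩
    simp only [litSat, hM0] at hsat
    cases b with
    | true => exact hc ⟨v, hmem, of_decide_eq_true hsat⟩
    | false => exact (of_decide_eq_false hsat) hmem
  have : ¬ setSat M0 (↑G : Set Clause) := fun h => hnc (hent M0 h)
  have : ∃ g ∈ G, ¬ clauseSat M0 g := by
    by_contra h
    push_neg at h
    exact this (fun g hg => h g (Finset.mem_coe.1 hg))
  obtain ⟨g, hg, hgsat⟩ := this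
  refine ⟨g, Deriv.base (Finset.mem_coe.2 hg), ?_⟩
  intro l hl
  obtain ⟨v, b⟩ := l
  have hvc : v ∈ c.image Prod.fst := hv (mem_varsFin.2 ⟨g, hg, b, hl⟩)
  obtain ⟨⟨v', b'⟩, hb', hv'⟩ := Finset.mem_image.1 hvc
  simp only at hv'
  rw [hv'] at hb'
  have hns : ¬ litSat M0 (v, b) := fun hs => hgsat ⟨(v, b), hl, hs⟩
  simp only [litSat, hM0] at hns
  cases b with
  | true =>
    have hcf : (v, false) ∉ c := by
      intro hcf
      exact hns (by simp [hcf])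
    cases b' with
    | true => exact hb'
    | false => exact absurd hb' hcf
  | false =>
    have : (v, false) ∈ c := by
      by_contra hcf
      exact hns (by simp [hcf])
    exact this

end Aux
section Complete

lemma clauseSat_update {M : ℕ → Bool} {v : ℕ} {b : Bool} {c : Clause}
    (hv : v ∉ c.image Prod.fst) (h : clauseSat (Function.update M v b) c) :
    clauseSat M c := by
  obtain ⟨l, hl, hs⟩ := h
  have hne : l.1 ≠ v := fun he => hv (Finset.mem_image.2 ⟨l, hl, he⟩)
  refine ⟨l, hl, ?_⟩
  rwa [litSat, Function.update_of_ne hne] at hs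

set_option maxHeartbeats 2000000 in
lemma resolution_complete (c : Clause) (hc : ¬ ClTaut c) :
    ∀ (n : ℕ) (G : Cnf), (varsFin G \ c.image Prod.fst).card ≤ n →
    (∀ g ∈ G, ¬ ClTaut g) → setEntails ↑G c →
    ∃ d, Deriv (↑G : Set Clause) d ∧ d ⊆ c := by
  classical
  intro n
  induction n with
  | zero =>
    intro G hcard hG hent
    refine complete_base G c hc ?_ hent
    intro w hw
    by_contra hwc
    have : w ∈ varsFin G \ c.image Prod.fst := Finset.mem_sdiff.2 ⟨hw, hwc⟩
    have := Finset.card_pos.2 ⟨w, this⟩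
    omega
  | succ n ih =>
    intro G hcard hG hent
    by_cases hemp : varsFin G \ c.image Prod.fst = ∅
    · refine complete_base G c hc ?_ hent
      intro w hw
      by_contra hwc
      exact Finset.notMem_empty w (hemp ▸ Finset.mem_sdiff.2 ⟨hw, hwc⟩)
    · obtain ⟨v, hv⟩ := Finset.nonempty_iff_ne_empty.2 hemp
      have hvG : v ∈ varsFin G := (Finset.mem_sdiff.1 hv).1
      have hvc : v ∉ c.image Prod.fst := (Finset.mem_sdiff.1 hv).2
      -- Davis-Putnam elimination of v
      set G1 : Cnf := G.filter (fun g => (v, true) ∉ g ∧ (v, false) ∉ g) with hG1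
      set R : Cnf := (((G.filter (fun g => (v, true) ∈ g)) ×ˢ
          (G.filter (fun g => (v, false) ∈ g))).image
          (fun p => p.1.erase (v, true) ∪ p.2.erase (v, false))).filter
          (fun r => ¬ ClTaut r) with hR
      set Gv : Cnf := G1 ∪ R with hGv
      -- every clause of Gv is derivable from G
      have hDeriv : ∀ h ∈ Gv, Deriv (↑G : Set Clause) h := by
        intro h hh
        rcases Finset.mem_union.1 hh with h1 | h2
        · exact Deriv.base (Finset.mem_coe.2 (Finset.mem_filter.1 h1).1)
        · obtain ⟨hmem, hnt⟩ := Finset.mem_filter.1 h2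
          obtain ⟨⟨g1, g2⟩, hp, heq⟩ := Finset.mem_image.1 hmem
          obtain ⟨hp1, hp2⟩ := Finset.mem_product.1 hp
          obtain ⟨hg1G, hg1v⟩ := Finset.mem_filter.1 hp1
          obtain ⟨hg2G, hg2v⟩ := Finset.mem_filter.1 hp2
          exact Deriv.step (Deriv.base (Finset.mem_coe.2 hg1G))
            (Deriv.base (Finset.mem_coe.2 hg2G)) ⟨hg1v, hg2v, heq.symm⟩ hnt
      -- no clause of Gv is tautological
      have hGvNT : ∀ h ∈ Gv, ¬ ClTaut h := by
        intro h hh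
        rcases Finset.mem_union.1 hh with h1 | h2
        · exact hG _ (Finset.mem_filter.1 h1).1
        · exact (Finset.mem_filter.1 h2).2
      -- v does not occur in Gv
      have hvGv : ∀ h ∈ Gv, ∀ b, (v, b) ∉ h := by
        intro h hh b hb
        rcases Finset.mem_union.1 hh with h1 | h2
        · obtain ⟨-, hn1, hn2⟩ := Finset.mem_filter.1 h1
          cases b
          · exact hn2 hb
          · exact hn1 hb
        · obtain ⟨hmem, -⟩ := Finset.mem_filter.1 h2
          obtain ⟨⟨g1, g2⟩, hp, heq⟩ := Finset.mem_image.1 hmem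
          obtain ⟨hp1, hp2⟩ := Finset.mem_product.1 hp
          obtain ⟨hg1G, hg1v⟩ := Finset.mem_filter.1 hp1
          obtain ⟨hg2G, hg2v⟩ := Finset.mem_filter.1 hp2
          rw [← heq] at hb
          rcases Finset.mem_union.1 hb with hb1 | hb2
          · obtain ⟨hne, hmem1⟩ := Finset.mem_erase.1 hb1
            cases b
            · exact hG _ hg1G ⟨v, hg1v, hmem1⟩
            · exact hne rfl
          · obtain ⟨hne, hmem2⟩ := Finset.mem_erase.1 hb2
            cases b
            · exact hne rfl
            · exact hG _ hg2G ⟨v, hmem2, hg2v⟩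
      have hvars : varsFin Gv ⊆ varsFin G := by
        intro w hw
        obtain ⟨h, hh, b, hb⟩ := mem_varsFin.1 hw
        rcases Finset.mem_union.1 hh with h1 | h2
        · exact mem_varsFin.2 ⟨h, (Finset.mem_filter.1 h1).1, b, hb⟩
        · obtain ⟨hmem, -⟩ := Finset.mem_filter.1 h2
          obtain ⟨⟨g1, g2⟩, hp, heq⟩ := Finset.mem_image.1 hmem
          obtain ⟨hp1, hp2⟩ := Finset.mem_product.1 hp
          rw [← heq] at hb
          rcases Finset.mem_union.1 hb with hb1 | hb2
          · exact mem_varsFin.2 ⟨g1, (Finset.mem_filter.1 hp1).1, b,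
              (Finset.mem_erase.1 hb1).2⟩
          · exact mem_varsFin.2 ⟨g2, (Finset.mem_filter.1 hp2).1, b,
              (Finset.mem_erase.1 hb2).2⟩
      -- Gv entails c
      have hentv : setEntails ↑Gv c := by
        intro M hM
        by_contra hnc
        -- for each value of v, some clause of G is falsified
        have hb : ∀ b : Bool, ∃ g ∈ G, ¬ clauseSat (Function.update M v b) g := by
          intro b
          by_contra hbb
          push_neg at hbb
          have : setSat (Function.update M v b) ↑G :=
            fun g hg => hbb g (Finset.mem_coe.1 hg)
          exact hnc (clauseSat_update hvc (hent _ this))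
        obtain ⟨gf, hgfG, hgf⟩ := hb true
        obtain ⟨gt, hgtG, hgt⟩ := hb false
        -- gt contains (v, true) but not (v, false); other literals are false under M
        have key : ∀ (g : Clause) (b : Bool), g ∈ G →
            ¬ clauseSat (Function.update M v b) g →
            (v, !b) ∈ g ∧ (v, b) ∉ g ∧ ∀ l ∈ g, l ≠ (v, !b) → ¬ litSat M l := by
          intro g b hgG hgs
          have hnb : (v, b) ∉ g := by
            intro hmem
            exact hgs ⟨(v, b), hmem, by exact Function.update_self v b M⟩
          have hnov : ∀ l ∈ g, l ≠ (v, !b) → l.1 ≠ v := by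
            rintro ⟨w, lb⟩ hl hlne he
            dsimp only at he
            subst he
            have hlb : lb = b := by
              cases b <;> cases lb <;> first | rfl | exact absurd rfl hlne
            rw [hlb] at hl
            exact hnb hl
          have hpos : (v, !b) ∈ g := by
            by_contra hnbb
            have hnov' : ∀ l ∈ g, l.1 ≠ v := by
              rintro ⟨w, lb⟩ hl he
              dsimp only at he
              subst he
              cases b <;> cases lb
              · exact hnb hl
              · exact hnbb hl
              · exact hnbb hl
              · exact hnb hl
            have hmemGv : g ∈ Gv := by
              refine Finset.mem_union_left _ (Finset.mem_filter.2 ⟨hgG, ?_⟩)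
              cases b
              · exact ⟨hnbb, hnb⟩
              · exact ⟨hnb, hnbb⟩
            obtain ⟨l, hl, hs⟩ := hM g (Finset.mem_coe.2 hmemGv)
            refine hgs ⟨l, hl, ?_⟩
            rwa [litSat, Function.update_of_ne (hnov' l hl)]
          refine ⟨hpos, hnb, ?_⟩
          intro l hl hlne hls
          exact hgs ⟨l, hl, by
            rwa [litSat, Function.update_of_ne (hnov l hl hlne)]⟩
        obtain ⟨hgt1, hgt2, hgt3⟩ := key gt false hgtG hgt
        obtain ⟨hgf1, hgf2, hgf3⟩ := key gf true hgfG hgf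
        simp only [Bool.not_false, Bool.not_true] at hgt1 hgt2 hgt3 hgf1 hgf2 hgf3
        set r : Clause := gt.erase (v, true) ∪ gf.erase (v, false) with hr
        have hrfalse : ∀ l ∈ r, ¬ litSat M l := by
          intro l hl
          rcases Finset.mem_union.1 hl with h1 | h2
          · exact hgt3 l (Finset.mem_erase.1 h1).2 (Finset.mem_erase.1 h1).1
          · exact hgf3 l (Finset.mem_erase.1 h2).2 (Finset.mem_erase.1 h2).1
        have hrnt : ¬ ClTaut r := by
          rintro ⟨w, hw1, hw2⟩
          have h1 := hrfalse _ hw1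
          have h2 := hrfalse _ hw2
          simp only [litSat] at h1 h2
          rcases Bool.dichotomy (M w) with h | h
          · exact h2 h
          · exact h1 h
        have hrGv : r ∈ Gv := by
          refine Finset.mem_union_right _ (Finset.mem_filter.2 ⟨?_, hrnt⟩)
          refine Finset.mem_image.2 ⟨(gt, gf), ?_, rfl⟩
          exact Finset.mem_product.2 ⟨Finset.mem_filter.2 ⟨hgtG, hgt1⟩,
            Finset.mem_filter.2 ⟨hgfG, hgf1⟩⟩
        obtain ⟨l, hl, hs⟩ := hM r (Finset.mem_coe.2 hrGv)
        exact hrfalse l hl hs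
      -- measure decreases
      have hlt : (varsFin Gv \ c.image Prod.fst).card ≤ n := by
        have hsub : varsFin Gv \ c.image Prod.fst ⊆
            (varsFin G \ c.image Prod.fst).erase v := by
          intro w hw
          obtain ⟨hw1, hw2⟩ := Finset.mem_sdiff.1 hw
          refine Finset.mem_erase.2 ⟨?_, Finset.mem_sdiff.2 ⟨hvars hw1, hw2⟩⟩
          intro he
          obtain ⟨h, hh, b, hb⟩ := mem_varsFin.1 hw1
          exact hvGv h hh b (he ▸ hb)
        have := Finset.card_le_card hsub
        have := Finset.card_erase_of_mem hv
        omega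
      obtain ⟨d, hd, hdc⟩ := ih Gv hlt hGvNT hentv
      exact ⟨d, deriv_mono_closure hDeriv hd, hdc⟩

end Complete
lemma sum_image_le_nat (s : Finset Clause) (f : Clause → Clause) (g : Clause → ℕ) :
    ∑ x ∈ s.image f, g x ≤ ∑ y ∈ s, g (f y) := by
  classical
  induction s using Finset.induction_on with
  | empty => simp
  | @insert a s ha ih =>
    rw [Finset.image_insert, Finset.sum_insert ha]
    by_cases h : f a ∈ s.image f
    · rw [Finset.insert_eq_self.2 h]
      exact le_trans ih (Nat.le_add_left _ _)
    · rw [Finset.sum_insert h]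
      exact Nat.add_le_add_left ih _

lemma deriv_mem_or_super {S : Set Clause} {F : Cnf}
    (hS : ∀ x ∈ S, Deriv (↑F : Set Clause) x) :
    ∀ {r : Clause}, Deriv S r → r ∈ S ∨ superRedundant F r := by
  intro r h
  induction h with
  | base h' => exact Or.inl h'
  | @step c1 c2 r v h1 h2 hres ht ih1 ih2 =>
    by_cases e1 : c1 = r
    · exact e1 ▸ ih1
    by_cases e2 : c2 = r
    · exact e2 ▸ ih2
    right
    intro M hM
    have hc1 : clauseSat M c1 :=
      hM c1 ⟨deriv_mono_closure hS h1, by simpa using e1⟩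
    have hc2 : clauseSat M c2 :=
      hM c2 ⟨deriv_mono_closure hS h2, by simpa using e2⟩
    exact resolvent_sound hres hc1 hc2

/-- If every clause of `F` is superirredundant then `F` is of minimal size. -/
theorem stmt11 (F : Cnf) (hNT : ∀ c ∈ F, ¬ ClTaut c)
    (hirr : ∀ c ∈ F, ¬ superRedundant F c) :
    ∀ G : Cnf, (∀ c ∈ G, ¬ ClTaut c) → cnfEquiv G F →
      cnfSize F ≤ cnfSize G := by
  intro G hGNT hequiv
  classical
  -- for every clause g of G, choose f g ∈ ResCn(F) with f g ⊆ g
  have hFg : ∀ g : Clause, ∃ d : Clause,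
      g ∈ G → Deriv (↑F : Set Clause) d ∧ d ⊆ g := by
    intro g
    by_cases hg : g ∈ G
    · have hent : setEntails ↑F g := by
        intro M hM
        have hMF : cnfSat M F := fun x hx => hM x (Finset.mem_coe.2 hx)
        exact ((hequiv M).2 hMF) g hg
      obtain ⟨d, hd, hdg⟩ := resolution_complete g (hGNT g hg)
        (varsFin F \ g.image Prod.fst).card F le_rfl hNT hent
      exact ⟨d, fun _ => ⟨hd, hdg⟩⟩
    · exact ⟨g, fun h => absurd h hg⟩
  choose f hf using hFg
  set G' : Cnf := G.image f with hG'
  have hG'F : ∀ x ∈ G', Deriv (↑F : Set Clause) x := by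
    intro x hx
    obtain ⟨g, hg, rfl⟩ := Finset.mem_image.1 hx
    exact (hf g hg).1
  have hG'NT : ∀ x ∈ G', ¬ ClTaut x := fun x hx =>
    deriv_nontaut (hG'F x hx) (fun y hy => hNT y (Finset.mem_coe.1 hy))
  -- F ⊆ G'
  have hFsub : F ⊆ G' := by
    intro c hc
    have hent : setEntails ↑G' c := by
      intro M hM
      have hMG : cnfSat M G := by
        intro g hg
        have : clauseSat M (f g) :=
          hM (f g) (Finset.mem_coe.2 (Finset.mem_image.2 ⟨g, hg, rfl⟩))
        exact clauseSat_of_subset (hf g hg).2 this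
      exact ((hequiv M).1 hMG) c hc
    obtain ⟨d, hd, hdc⟩ := resolution_complete c (hNT c hc)
      (varsFin G' \ c.image Prod.fst).card G' le_rfl hG'NT hent
    -- d ⊆ c and d ∈ ResCn F; by superirredundance d = c
    have hdF : Deriv (↑F : Set Clause) d :=
      deriv_mono_closure (fun x hx => hG'F x (Finset.mem_coe.1 hx)) hd
    have hdc' : d = c := by
      by_contra hne
      refine hirr c hc ?_
      intro M hM
      exact clauseSat_of_subset hdc (hM d ⟨hdF, by simpa using hne⟩)
    subst hdc'
    rcases deriv_mem_or_super (fun x hx => hG'F x (Finset.mem_coe.1 hx)) hd with h | h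
    · exact Finset.mem_coe.1 h
    · exact absurd h (hirr d hc)
  calc cnfSize F ≤ cnfSize G' :=
        Finset.sum_le_sum_of_subset hFsub
    _ ≤ ∑ g ∈ G, (f g).card := sum_image_le_nat G f _
    _ ≤ ∑ g ∈ G, g.card :=
        Finset.sum_le_sum (fun g hg => Finset.card_le_card ((hf g hg).2))
    _ = cnfSize G := rfl
end
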